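/- arXiv:1102.4086 — 2 statements merged into one kernel-verified Lean document; each statement's English description precedes it below -/
import Mathlib

section
/- (Theorem: potential bound for Schroedinger Eigenmaps minimizers, part a) Let L be a symmetric positive semi-definite m×m matrix, D a positive-definite diagonal m×m matrix, V a symmetric positive semi-definite m×m matrix with dim Null(D^{−1/2} V D^{−1/2}) ≥ n, and α > 0. Define C_1 = min { trace(z_Nᵀ 𝓛 z_N) : z_N is an m×n matrix with columns in Null(𝓥) and z_Nᵀ z_N = I }, where 𝓛 = D^{−1/2} L D^{−1/2} and 𝓥 = D^{−1/2} V D^{−1/2}. If y^(α) minimizes trace(yᵀ (L + αV) y) over all m×n matrices y with yᵀ D y = I, then trace((y^(α))ᵀ V y^(α)) ≤ C_1 / α. -/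
open Matrix BigOperators

theorem schroedinger_potential_bound (m n : ℕ)
    (L : Matrix (Fin m) (Fin m) ℝ) (hL : L.PosSemidef)
    (d : Fin m → ℝ) (hd : ∀ i, 0 < d i)
    (V : Matrix (Fin m) (Fin m) ℝ) (hV : V.PosSemidef)
    (α : ℝ) (hα : 0 < α)
    (𝓛 𝓥 : Matrix (Fin m) (Fin m) ℝ)
    (h𝓛 : 𝓛 = (Matrix.diagonal fun i => (Real.sqrt (d i))⁻¹) * L *
            (Matrix.diagonal fun i => (Real.sqrt (d i))⁻¹))
    (h𝓥 : 𝓥 = (Matrix.diagonal fun i => (Real.sqrt (d i))⁻¹) * V *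
            (Matrix.diagonal fun i => (Real.sqrt (d i))⁻¹))
    (hdim : n ≤ Module.finrank ℝ (LinearMap.ker 𝓥.mulVecLin))
    (C₁ : ℝ)
    (hC₁ : IsLeast { c : ℝ | ∃ zN : Matrix (Fin m) (Fin n) ℝ,
        (∀ j, 𝓥.mulVec (fun i => zN i j) = 0) ∧ zNᵀ * zN = 1 ∧
        c = (zNᵀ * 𝓛 * zN).trace } C₁)
    (y : Matrix (Fin m) (Fin n) ℝ)
    (hconstr : yᵀ * Matrix.diagonal d * y = 1)
    (hmin : ∀ y' : Matrix (Fin m) (Fin n) ℝ, y'ᵀ * Matrix.diagonal d * y' = 1 →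
      (yᵀ * (L + α • V) * y).trace ≤ (y'ᵀ * (L + α • V) * y').trace) :
    (yᵀ * V * y).trace ≤ C₁ / α := by
  obtain ⟨zN, hker, hortho, hCval⟩ := hC₁.1
  set S : Matrix (Fin m) (Fin m) ℝ := Matrix.diagonal fun i => (Real.sqrt (d i))⁻¹ with hS
  have hSsym : Sᵀ = S := Matrix.diagonal_transpose _
  set y' : Matrix (Fin m) (Fin n) ℝ := S * zN with hy'
  have hSDS : S * Matrix.diagonal d * S = 1 := by
    rw [hS, Matrix.diagonal_mul_diagonal, Matrix.diagonal_mul_diagonal]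
    have heq : (fun i => (Real.sqrt (d i))⁻¹ * d i * (Real.sqrt (d i))⁻¹)
        = fun _ : Fin m => (1 : ℝ) := by
      funext i
      have h1 : Real.sqrt (d i) ≠ 0 := ne_of_gt (Real.sqrt_pos.mpr (hd i))
      have h2 : Real.sqrt (d i) * Real.sqrt (d i) = d i := Real.mul_self_sqrt (hd i).le
      rw [← h2]
      field_simp
      rw [Real.sqrt_sq (Real.sqrt_nonneg _)]
    rw [heq, Matrix.diagonal_one]
  have hconj : ∀ M : Matrix (Fin m) (Fin m) ℝ, y'ᵀ * M * y' = zNᵀ * (S * M * S) * zN := by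
    intro M
    rw [hy', Matrix.transpose_mul, hSsym]
    simp only [Matrix.mul_assoc]
  have hy'constr : y'ᵀ * Matrix.diagonal d * y' = 1 := by
    rw [hconj, hSDS, Matrix.mul_one, hortho]
  have hVz : 𝓥 * zN = 0 := by
    ext i j
    have := congrFun (hker j) i
    simpa [Matrix.mulVec, Matrix.mul_apply, dotProduct] using this
  have htrV0 : (y'ᵀ * V * y').trace = 0 := by
    rw [hconj, ← h𝓥, Matrix.mul_assoc, hVz, Matrix.mul_zero, Matrix.trace_zero]
  have htrL : (y'ᵀ * L * y').trace = C₁ := by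
    rw [hconj, ← h𝓛]
    exact hCval.symm
  have hkey := hmin y' hy'constr
  have hexp : ∀ z : Matrix (Fin m) (Fin n) ℝ,
      (zᵀ * (L + α • V) * z).trace = (zᵀ * L * z).trace + α * (zᵀ * V * z).trace := by
    intro z
    rw [Matrix.mul_add, Matrix.add_mul, Matrix.trace_add]
    congr 1
    rw [Matrix.mul_smul, Matrix.smul_mul, Matrix.trace_smul, smul_eq_mul]
  rw [hexp, hexp, htrL, htrV0, mul_zero, add_zero] at hkey
  have hLpos : 0 ≤ (yᵀ * L * y).trace := by
    have hpsd : (yᵀ * L * y).PosSemidef := by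
      have := hL.conjTranspose_mul_mul_same y
      simpa using this
    rw [Matrix.trace]
    apply Finset.sum_nonneg
    intro i _
    have := hpsd.dotProduct_mulVec_nonneg (Pi.single i 1)
    simpa [Matrix.mulVec_single, dotProduct, Pi.single_apply, Matrix.diag] using this
  have h1 : α * (yᵀ * V * y).trace ≤ C₁ := by linarith
  rw [← le_div_iff₀' hα] at h1
  exact h1
end

section
/- (Theorem: null-space concentration, part b) Under the setup of the Schroedinger Eigenmaps minimization (L symmetric PSD, D positive-definite diagonal, V symmetric PSD, 𝓥 = D^{−1/2}VD^{−1/2} with Null(𝓥) ≠ {0} of dimension ≥ n, α > 0), let y^(α) minimize trace(yᵀ(L+αV)y) subject to yᵀDy = I, set z^(α) = D^{1/2} y^(α), and let z^(α)_N be the columnwise orthogonal projection of z^(α) onto Null(𝓥). Then there exists a constant C_2 ≥ 0, independent of α, such that trace((z^(α)_N)ᵀ z^(α)_N) ≥ n − C_2/α. -/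
open Matrix BigOperators

private lemma traceConjAux {m n : ℕ} (M : Matrix (Fin m) (Fin m) ℝ) (A : Matrix (Fin m) (Fin n) ℝ) :
    (Aᵀ * M * A).trace = ∑ j, (fun i => A i j) ⬝ᵥ M *ᵥ (fun i => A i j) := by
  simp only [Matrix.trace, Matrix.diag, Matrix.mul_apply, Matrix.transpose_apply,
    dotProduct, Matrix.mulVec, Finset.sum_mul, Finset.mul_sum]
  refine Finset.sum_congr rfl fun j _ => ?_
  rw [Finset.sum_comm]
  refine Finset.sum_congr rfl fun i _ => Finset.sum_congr rfl fun k _ => ?_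
  ring

private lemma traceGramAux {m n : ℕ} (A : Matrix (Fin m) (Fin n) ℝ) :
    (Aᵀ * A).trace = ∑ j, (fun i => A i j) ⬝ᵥ (fun i => A i j) := by
  simp [Matrix.trace, Matrix.diag, Matrix.mul_apply, dotProduct]

private lemma exists_feasible (m n : ℕ) (𝓥 : Matrix (Fin m) (Fin m) ℝ)
    (hdim : n ≤ Module.finrank ℝ (LinearMap.ker 𝓥.mulVecLin)) :
    ∃ u : Matrix (Fin m) (Fin n) ℝ, uᵀ * u = 1 ∧ ∀ j, 𝓥 *ᵥ (fun i => u i j) = 0 := by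
  let e : EuclideanSpace ℝ (Fin m) ≃ₗ[ℝ] (Fin m → ℝ) := WithLp.linearEquiv 2 ℝ (Fin m → ℝ)
  let K : Submodule ℝ (EuclideanSpace ℝ (Fin m)) :=
    (LinearMap.ker 𝓥.mulVecLin).comap e.toLinearMap
  have hrank : n ≤ Module.finrank ℝ K := by
    rw [show K = (LinearMap.ker 𝓥.mulVecLin).comap e.toLinearMap from rfl,
      Submodule.comap_equiv_eq_map_symm]
    rwa [LinearEquiv.finrank_map_eq]
  let b := stdOrthonormalBasis ℝ K
  let v : Fin n → EuclideanSpace ℝ (Fin m) :=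
    fun j => (b (Fin.castLE hrank j) : EuclideanSpace ℝ (Fin m))
  have hv : ∀ j, v j ∈ K := fun j => (b (Fin.castLE hrank j)).2
  have hortho : ∀ j k, (inner ℝ (v j) (v k) : ℝ) = if j = k then 1 else 0 := by
    intro j k
    have := b.orthonormal
    rw [orthonormal_iff_ite] at this
    have h2 := this (Fin.castLE hrank j) (Fin.castLE hrank k)
    rw [Submodule.coe_inner] at h2
    rw [h2]
    simp [Fin.castLE_inj]
  refine ⟨Matrix.of (fun i j => v j i), ?_, ?_⟩
  · ext j k
    have h3 := hortho j k
    simp only [PiLp.inner_apply, RCLike.inner_apply, conj_trivial] at h3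
    simp only [Matrix.mul_apply, Matrix.transpose_apply, Matrix.of_apply]
    rw [Finset.sum_congr rfl fun i _ => mul_comm _ _, h3]
    by_cases h : j = k <;> simp [h, Matrix.one_apply]
  · intro j
    exact (hv j)

private lemma coercive (m : ℕ) (𝓥 : Matrix (Fin m) (Fin m) ℝ) (h𝓥 : 𝓥.PosSemidef) :
    ∃ c : ℝ, 0 < c ∧ ∀ v : Fin m → ℝ,
      (∀ s : Fin m → ℝ, 𝓥 *ᵥ s = 0 → v ⬝ᵥ s = 0) → c * (v ⬝ᵥ v) ≤ v ⬝ᵥ (𝓥 *ᵥ v) := by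
  let e : EuclideanSpace ℝ (Fin m) ≃ₗ[ℝ] (Fin m → ℝ) := WithLp.linearEquiv 2 ℝ (Fin m → ℝ)
  let K : Submodule ℝ (EuclideanSpace ℝ (Fin m)) :=
    (LinearMap.ker 𝓥.mulVecLin).comap e.toLinearMap
  obtain ⟨B, hBB, hBsym⟩ : ∃ B : Matrix (Fin m) (Fin m) ℝ, B * B = 𝓥 ∧ Bᵀ = B := by
    open scoped MatrixOrder Matrix.Norms.L2Operator in
    exact ⟨CFC.sqrt 𝓥, CFC.sqrt_mul_sqrt_self 𝓥 h𝓥.nonneg, by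
      have := (CFC.sqrt_nonneg 𝓥).posSemidef.isHermitian
      simpa [Matrix.IsHermitian, Matrix.conjTranspose_eq_transpose_of_trivial] using this⟩
  let f : Kᗮ →ₗ[ℝ] EuclideanSpace ℝ (Fin m) :=
    (Matrix.toEuclideanLin B).domRestrict Kᗮ
  have hker : LinearMap.ker f = ⊥ := by
    rw [LinearMap.ker_eq_bot']
    rintro ⟨x, hx⟩ hfx
    have hBx : B *ᵥ (fun i => x i) = 0 := by
      have : Matrix.toEuclideanLin B x = 0 := hfx
      exact congrArg (fun w => (e w : Fin m → ℝ)) this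
    have h𝓥x : 𝓥 *ᵥ (fun i => x i) = 0 := by
      rw [← hBB, ← Matrix.mulVec_mulVec, hBx, Matrix.mulVec_zero]
    have hxK : x ∈ K := h𝓥x
    have hx0 : x = 0 := by
      have h0 : (inner ℝ x x : ℝ) = 0 := (Submodule.mem_orthogonal _ _).1 hx x hxK
      exact inner_self_eq_zero.mp h0
    exact Subtype.ext hx0
  obtain ⟨C, hC, hCf⟩ := f.exists_antilipschitzWith hker
  refine ⟨((C : ℝ) ^ 2)⁻¹, by positivity, ?_⟩
  intro v hv
  let v' : EuclideanSpace ℝ (Fin m) := e.symm v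
  have hv' : v' ∈ Kᗮ := by
    rw [Submodule.mem_orthogonal]
    intro s hs
    have h1 : 𝓥 *ᵥ (fun i => s i) = 0 := hs
    have h2 := hv _ h1
    have h3 : (inner ℝ s v' : ℝ) = v ⬝ᵥ (fun i => s i) := by
      simp only [PiLp.inner_apply, RCLike.inner_apply, conj_trivial, dotProduct]
      exact Finset.sum_congr rfl fun i _ => rfl
    rw [h3, h2]
  set x : Kᗮ := ⟨v', hv'⟩ with hxdef
  have hnorm : ‖v'‖ ≤ (C : ℝ) * ‖f x‖ := by
    have h4 := hCf.le_mul_dist x 0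
    simpa [dist_eq_norm, map_zero] using h4
  have hfx : (fun i => (f x) i) = B *ᵥ v := rfl
  have hBv : v ⬝ᵥ (𝓥 *ᵥ v) = (B *ᵥ v) ⬝ᵥ (B *ᵥ v) := by
    rw [← hBB, ← Matrix.mulVec_mulVec, Matrix.dotProduct_mulVec]
    congr 1
    rw [show B = Bᵀ from hBsym.symm, Matrix.vecMul_transpose, hBsym]
  have hnormsq : ‖f x‖ ^ 2 = (B *ᵥ v) ⬝ᵥ (B *ᵥ v) := by
    rw [← real_inner_self_eq_norm_sq]
    simp only [PiLp.inner_apply, RCLike.inner_apply, conj_trivial, dotProduct]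
    rw [← hfx]
  have hvv : v ⬝ᵥ v = ‖v'‖ ^ 2 := by
    rw [← real_inner_self_eq_norm_sq]
    simp only [PiLp.inner_apply, RCLike.inner_apply, conj_trivial, dotProduct]
    rfl
  have hsq : ‖v'‖ ^ 2 ≤ (C : ℝ) ^ 2 * ‖f x‖ ^ 2 := by
    have := mul_self_le_mul_self (norm_nonneg v') hnorm
    calc ‖v'‖ ^ 2 = ‖v'‖ * ‖v'‖ := sq ‖v'‖
      _ ≤ ((C : ℝ) * ‖f x‖) * ((C : ℝ) * ‖f x‖) := this
      _ = (C : ℝ) ^ 2 * ‖f x‖ ^ 2 := by ring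
  rw [hBv, ← hnormsq, hvv]
  rw [inv_mul_le_iff₀ (by positivity)]
  linarith [hsq]

theorem schroedinger_nullspace_concentration (m n : ℕ)
    (L : Matrix (Fin m) (Fin m) ℝ) (hL : L.PosSemidef)
    (d : Fin m → ℝ) (hd : ∀ i, 0 < d i)
    (V : Matrix (Fin m) (Fin m) ℝ) (hV : V.PosSemidef)
    (𝓥 : Matrix (Fin m) (Fin m) ℝ)
    (h𝓥 : 𝓥 = (Matrix.diagonal fun i => (Real.sqrt (d i))⁻¹) * V *
            (Matrix.diagonal fun i => (Real.sqrt (d i))⁻¹))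
    (hker : LinearMap.ker 𝓥.mulVecLin ≠ ⊥)
    (hdim : n ≤ Module.finrank ℝ (LinearMap.ker 𝓥.mulVecLin)) :
    ∃ C₂ : ℝ, 0 ≤ C₂ ∧ ∀ (α : ℝ), 0 < α →
      ∀ (y zN : Matrix (Fin m) (Fin n) ℝ),
        yᵀ * Matrix.diagonal d * y = 1 →
        (∀ y' : Matrix (Fin m) (Fin n) ℝ, y'ᵀ * Matrix.diagonal d * y' = 1 →
          (yᵀ * (L + α • V) * y).trace ≤ (y'ᵀ * (L + α • V) * y').trace) →
        (∀ j, 𝓥.mulVec (fun i => zN i j) = 0) →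
        (∀ j, ∀ s : Fin m → ℝ, 𝓥.mulVec s = 0 →
          (fun i => ((Matrix.diagonal fun i => Real.sqrt (d i)) * y) i j - zN i j) ⬝ᵥ s = 0) →
        (n : ℝ) - C₂ / α ≤ (zNᵀ * zN).trace := by
  -- notation
  set S : Matrix (Fin m) (Fin m) ℝ := Matrix.diagonal fun i => Real.sqrt (d i) with hSdef
  set Sinv : Matrix (Fin m) (Fin m) ℝ := Matrix.diagonal fun i => (Real.sqrt (d i))⁻¹ with hSinvdef
  have hsqrt_ne : ∀ i, Real.sqrt (d i) ≠ 0 := fun i => ne_of_gt (Real.sqrt_pos.mpr (hd i))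
  have hSS : S * S = Matrix.diagonal d := by
    rw [hSdef, Matrix.diagonal_mul_diagonal]
    exact congrArg Matrix.diagonal (funext fun i => Real.mul_self_sqrt (hd i).le)
  have hSSinv : S * Sinv = 1 := by
    rw [hSdef, hSinvdef, Matrix.diagonal_mul_diagonal]
    rw [show (fun i => Real.sqrt (d i) * (Real.sqrt (d i))⁻¹) = fun _ => (1:ℝ) from
      funext fun i => mul_inv_cancel₀ (hsqrt_ne i), Matrix.diagonal_one]
  have hSinvS : Sinv * S = 1 := by
    rw [hSdef, hSinvdef, Matrix.diagonal_mul_diagonal]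
    rw [show (fun i => (Real.sqrt (d i))⁻¹ * Real.sqrt (d i)) = fun _ => (1:ℝ) from
      funext fun i => inv_mul_cancel₀ (hsqrt_ne i), Matrix.diagonal_one]
  have hSinvsym : Sinvᵀ = Sinv := Matrix.diagonal_transpose _
  have hSsym : Sᵀ = S := Matrix.diagonal_transpose _
  -- 𝓥 is PSD
  have h𝓥psd : 𝓥.PosSemidef := by
    rw [h𝓥]
    have := hV.conjTranspose_mul_mul_same Sinv
    simpa [Matrix.conjTranspose_eq_transpose_of_trivial, hSinvsym] using this
  have h𝓥sym : 𝓥ᵀ = 𝓥 := by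
    have := h𝓥psd.isHermitian
    simpa [Matrix.IsHermitian, Matrix.conjTranspose_eq_transpose_of_trivial] using this
  obtain ⟨u, huu, huker⟩ := exists_feasible m n 𝓥 hdim
  obtain ⟨c, hc, hcoer⟩ := coercive m 𝓥 h𝓥psd
  set y₀ : Matrix (Fin m) (Fin n) ℝ := Sinv * u with hy₀def
  set C₁ : ℝ := (y₀ᵀ * L * y₀).trace with hC₁def
  have hC₁ : 0 ≤ C₁ := by
    rw [hC₁def, traceConjAux]
    exact Finset.sum_nonneg fun j _ => by simpa using hL.dotProduct_mulVec_nonneg (fun i => y₀ i j)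
  refine ⟨C₁ / c, div_nonneg hC₁ hc.le, ?_⟩
  intro α hα y zN hyD hmin hzNker horth
  -- y₀ is feasible
  have hy₀feas : y₀ᵀ * Matrix.diagonal d * y₀ = 1 := by
    rw [hy₀def, Matrix.transpose_mul, hSinvsym]
    calc uᵀ * Sinv * Matrix.diagonal d * (Sinv * u)
        = uᵀ * (Sinv * ((S * S) * Sinv) * u) := by rw [hSS]; simp only [Matrix.mul_assoc]
      _ = uᵀ * u := by rw [Matrix.mul_assoc S S Sinv, hSSinv, Matrix.mul_one, hSinvS, Matrix.one_mul]
      _ = 1 := huu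
  -- trace splitting
  have hsplit : ∀ w : Matrix (Fin m) (Fin n) ℝ,
      (wᵀ * (L + α • V) * w).trace = (wᵀ * L * w).trace + α * (wᵀ * V * w).trace := by
    intro w
    rw [Matrix.mul_add, Matrix.add_mul, Matrix.trace_add]
    congr 1
    rw [Matrix.mul_smul, Matrix.smul_mul, Matrix.trace_smul]
    simp [smul_eq_mul]
  have huV : (y₀ᵀ * V * y₀).trace = 0 := by
    have hconj : y₀ᵀ * V * y₀ = uᵀ * 𝓥 * u := by
      rw [hy₀def, Matrix.transpose_mul, hSinvsym, h𝓥]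
      simp only [Matrix.mul_assoc]
    rw [hconj, traceConjAux]
    refine Finset.sum_eq_zero fun j _ => ?_
    rw [huker j, dotProduct_zero]
  have hy₀val : (y₀ᵀ * (L + α • V) * y₀).trace = C₁ := by
    rw [hsplit, huV, hC₁def]; ring
  have hLy : 0 ≤ (yᵀ * L * y).trace := by
    rw [traceConjAux]
    exact Finset.sum_nonneg fun j _ => by simpa using hL.dotProduct_mulVec_nonneg (fun i => y i j)
  have hmin' := hmin y₀ hy₀feas
  rw [hy₀val, hsplit y] at hmin'
  have hbound : α * (yᵀ * V * y).trace ≤ C₁ := by linarith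
  -- z and zV
  set z : Matrix (Fin m) (Fin n) ℝ := S * y with hzdef
  set zV : Fin n → Fin m → ℝ := fun j i => z i j - zN i j with hzVdef
  have hzVorth : ∀ j, ∀ s : Fin m → ℝ, 𝓥 *ᵥ s = 0 → (zV j) ⬝ᵥ s = 0 := fun j s hs => horth j s hs
  have hzcol : ∀ j, (fun i => z i j) = (fun i => zN i j) + zV j := by
    intro j; funext i; simp [hzVdef]
  have hVtrace : (yᵀ * V * y).trace = ∑ j, (fun i => z i j) ⬝ᵥ 𝓥 *ᵥ (fun i => z i j) := by
    have hmid : S * (Sinv * V * Sinv) * S = V := by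
      calc S * (Sinv * V * Sinv) * S = S * (Sinv * (V * (Sinv * S))) := by
            simp only [Matrix.mul_assoc]
        _ = V := by rw [hSinvS, Matrix.mul_one, ← Matrix.mul_assoc, hSSinv, Matrix.one_mul]
    have hzVz : zᵀ * 𝓥 * z = yᵀ * V * y := by
      rw [hzdef, Matrix.transpose_mul, hSsym, h𝓥]
      calc yᵀ * S * (Sinv * V * Sinv) * (S * y)
          = yᵀ * (S * (Sinv * V * Sinv) * S) * y := by simp only [Matrix.mul_assoc]
        _ = yᵀ * V * y := by rw [hmid]
    rw [← hzVz, traceConjAux]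
  have hdecomp : ∀ j, (fun i => z i j) ⬝ᵥ 𝓥 *ᵥ (fun i => z i j) = zV j ⬝ᵥ 𝓥 *ᵥ zV j := by
    intro j
    rw [hzcol j, Matrix.mulVec_add, hzNker j, zero_add, add_dotProduct]
    have hcross : (fun i => zN i j) ⬝ᵥ (𝓥 *ᵥ zV j) = 0 := by
      rw [Matrix.dotProduct_mulVec,
        show Matrix.vecMul (fun i => zN i j) 𝓥 = 𝓥 *ᵥ (fun i => zN i j) from by
          rw [← h𝓥sym, Matrix.vecMul_transpose, h𝓥sym],
        hzNker j, zero_dotProduct]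
    rw [hcross, zero_add]
  set T : ℝ := ∑ j, zV j ⬝ᵥ zV j with hTdef
  have hT0 : 0 ≤ T := Finset.sum_nonneg fun j _ => Finset.sum_nonneg fun i _ => mul_self_nonneg _
  have hcT : c * T ≤ (yᵀ * V * y).trace := by
    rw [hVtrace, hTdef, Finset.mul_sum]
    refine Finset.sum_le_sum fun j _ => ?_
    rw [hdecomp j]
    exact hcoer (zV j) (hzVorth j)
  -- Pythagoras
  have hpyth : ∀ j, (fun i => z i j) ⬝ᵥ (fun i => z i j) =
      (fun i => zN i j) ⬝ᵥ (fun i => zN i j) + zV j ⬝ᵥ zV j := by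
    intro j
    rw [hzcol j, add_dotProduct, dotProduct_add, dotProduct_add]
    have h0 : zV j ⬝ᵥ (fun i => zN i j) = 0 := hzVorth j _ (hzNker j)
    have h0' : (fun i => zN i j) ⬝ᵥ zV j = 0 := by rw [dotProduct_comm]; exact h0
    rw [h0, h0']; ring
  have hztrace : ∑ j, (fun i => z i j) ⬝ᵥ (fun i => z i j) = (n : ℝ) := by
    rw [← traceGramAux]
    have hz1 : zᵀ * z = 1 := by
      rw [hzdef, Matrix.transpose_mul, hSsym]
      calc yᵀ * S * (S * y) = yᵀ * (S * S) * y := by simp only [Matrix.mul_assoc]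
        _ = 1 := by rw [hSS]; exact hyD
    rw [hz1, Matrix.trace_one]; simp
  have hNtrace : (zNᵀ * zN).trace = (n : ℝ) - T := by
    have hsum := Finset.sum_congr rfl (fun j (_ : j ∈ Finset.univ) => hpyth j)
    rw [Finset.sum_add_distrib] at hsum
    rw [traceGramAux]
    rw [hztrace] at hsum
    rw [hTdef]
    linarith
  -- conclude
  have hV0 : 0 ≤ (yᵀ * V * y).trace := by
    nlinarith
  have hTle : T ≤ (C₁ / c) / α := by
    rw [div_div, le_div_iff₀ (by positivity)]
    nlinarith [mul_le_mul_of_nonneg_left hcT hα.le]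
  rw [hNtrace]
  linarith
end
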